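/- Let $G$ be a group that is locally indicable. Then the free product $G * H$ of two locally indicable groups $G$ and $H$ is locally indicable. -/

import Mathlib

/-- A group is locally indicable if every nontrivial finitely generated subgroup
surjects onto `ℤ`. -/
def LocallyIndicable (G : Type*) [Group G] : Prop :=
  ∀ H : Subgroup G, H ≠ ⊥ → Group.FG H →
    ∃ f : H →* Multiplicative ℤ, Function.Surjective f

open Monoid CoprodI Function
open scoped commutatorElement

namespace LIAux

variable {ι : Type*} {M : ι → Type*} [∀ i, Group (M i)]

open CoprodI.Word

theorem word_prod_def (w : Word M) : w.prod = (w.toList.map fun x => of x.snd).prod := rfl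

/-- Core ping-pong computation. -/
theorem pp_core {i j : ι} (hij : i ≠ j) {g : M i} {h : M j} (hg : g ≠ 1) (hh : h ≠ 1)
    (w : Word M)
    (hw : ¬ (w.toList.take 2 = [⟨j, h⟩, ⟨i, g⟩] ∧ 3 ≤ w.toList.length)) :
    ∃ u : Word M,
      u.prod = (of g * of h * (of g)⁻¹ * (of h)⁻¹) * w.prod ∧
      u.toList.take 2 = [⟨i, g⟩, ⟨j, h⟩] ∧
      (w.toList.take 2 ≠ [⟨j, h⟩, ⟨i, g⟩] → 3 ≤ u.toList.length) := by
  classical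
  obtain ⟨l, hne, hch⟩ := w
  simp only [word_prod_def] at hw ⊢
  rcases l with _ | ⟨⟨i₁, m⟩, rest⟩
  · -- empty word
    refine ⟨⟨[⟨i, g⟩, ⟨j, h⟩, ⟨i, g⁻¹⟩, ⟨j, h⁻¹⟩], ?_, ?_⟩, ?_, ?_, ?_⟩
    · simp [hg, hh]
    · simp [List.isChain_cons_cons, hij, Ne.symm hij]
    · simp [map_inv, mul_assoc]
    · simp
    · simp
  · rw [List.forall_mem_cons] at hne
    obtain ⟨hm, hner⟩ := hne
    rw [List.isChain_cons] at hch
    obtain ⟨hch1, hch2⟩ := hch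
    rcases eq_or_ne j i₁ with rfl | hi₁
    ·
      by_cases hmh : h⁻¹ * m = 1
      · -- m = h : cancellation
        have hm2 : h = m := by
          rw [inv_mul_eq_one] at hmh; exact hmh
        subst hm2
        rcases rest with _ | ⟨⟨i₂, m₂⟩, rest₂⟩
        · refine ⟨⟨[⟨i, g⟩, ⟨j, h⟩, ⟨i, g⁻¹⟩], ?_, ?_⟩, ?_, ?_, ?_⟩
          · simp [hg, hh]
          · simp [List.isChain_cons_cons, hij, Ne.symm hij]
          · simp [map_inv, mul_assoc]
          · simp
          · simp
        · have hi₂ : i₂ ≠ j := by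
            intro hEq
            exact (hch1 ⟨i₂, m₂⟩ (by simp)) hEq.symm
          rw [List.forall_mem_cons] at hner
          obtain ⟨hm₂, hner₂⟩ := hner
          rw [List.isChain_cons] at hch2
          obtain ⟨hch21, hch22⟩ := hch2
          rcases eq_or_ne i i₂ with rfl | hii
          ·
            by_cases hgm : g⁻¹ * m₂ = 1
            · -- m₂ = g : full cancellation; forbidden prefix, so rest₂ = []
              have hm₂2 : g = m₂ := by rw [inv_mul_eq_one] at hgm; exact hgm
              subst hm₂2
              have hr2 : rest₂ = [] := by
                by_contra hne2
                refine hw ⟨by simp, ?_⟩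
                rcases rest₂ with _ | ⟨x, t⟩
                · exact absurd rfl hne2
                · simp only [List.length_cons]; omega
              subst hr2
              refine ⟨⟨[⟨i, g⟩, ⟨j, h⟩], ?_, ?_⟩, ?_, ?_, ?_⟩
              · simp [hg, hh]
              · simp [List.isChain_cons_cons, hij]
              · simp [map_inv, mul_assoc]
              · simp
              · intro hcon; exact absurd (by simp) hcon
            · refine ⟨⟨⟨i, g⟩ :: ⟨j, h⟩ :: ⟨i, g⁻¹ * m₂⟩ :: rest₂, ?_, ?_⟩, ?_, ?_, ?_⟩
              · rw [List.forall_mem_cons, List.forall_mem_cons, List.forall_mem_cons]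
                exact ⟨hg, hm, hgm, hner₂⟩
              · rw [List.isChain_cons_cons, List.isChain_cons_cons, List.isChain_cons]
                exact ⟨hij, Ne.symm hij, hch21, hch22⟩
              · simp [map_inv, map_mul, mul_assoc]
              · simp
              · simp
          · refine ⟨⟨⟨i, g⟩ :: ⟨j, h⟩ :: ⟨i, g⁻¹⟩ :: ⟨i₂, m₂⟩ :: rest₂, ?_, ?_⟩, ?_, ?_, ?_⟩
            · rw [List.forall_mem_cons, List.forall_mem_cons, List.forall_mem_cons,
                List.forall_mem_cons]
              exact ⟨hg, hm, inv_ne_one.2 hg, hm₂, hner₂⟩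
            · rw [List.isChain_cons_cons, List.isChain_cons_cons, List.isChain_cons_cons, List.isChain_cons]
              exact ⟨hij, Ne.symm hij, fun hEq => hii (by exact hEq), hch21, hch22⟩
            · simp [map_inv, map_mul, mul_assoc]
            · simp
            · simp
      · -- no cancellation of h with head
        refine ⟨⟨⟨i, g⟩ :: ⟨j, h⟩ :: ⟨i, g⁻¹⟩ :: ⟨j, h⁻¹ * m⟩ :: rest, ?_, ?_⟩, ?_, ?_, ?_⟩
        · rw [List.forall_mem_cons, List.forall_mem_cons, List.forall_mem_cons,
            List.forall_mem_cons]
          exact ⟨hg, hh, inv_ne_one.2 hg, hmh, hner⟩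
        · rw [List.isChain_cons_cons, List.isChain_cons_cons, List.isChain_cons_cons, List.isChain_cons]
          exact ⟨hij, Ne.symm hij, hij, hch1, hch2⟩
        · simp [map_inv, map_mul, mul_assoc]
        · simp
        · simp
    · -- head has index ≠ j : prepend all four letters
      refine ⟨⟨⟨i, g⟩ :: ⟨j, h⟩ :: ⟨i, g⁻¹⟩ :: ⟨j, h⁻¹⟩ :: ⟨i₁, m⟩ :: rest, ?_, ?_⟩, ?_, ?_, ?_⟩
      · rw [List.forall_mem_cons, List.forall_mem_cons, List.forall_mem_cons,
          List.forall_mem_cons, List.forall_mem_cons]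
        exact ⟨hg, hh, inv_ne_one.2 hg, inv_ne_one.2 hh, hm, hner⟩
      · rw [List.isChain_cons_cons, List.isChain_cons_cons, List.isChain_cons_cons, List.isChain_cons_cons,
          List.isChain_cons]
        exact ⟨hij, Ne.symm hij, hij, fun hEq => hi₁ (by exact hEq), hch1, hch2⟩
      · simp [map_inv, mul_assoc]
      · simp
      · simp

end LIAux

namespace LIAux

theorem prod_injective {ι : Type*} {M : ι → Type*} [∀ i, Group (M i)] :
    Function.Injective (Word.prod : CoprodI.Word M → CoprodI M) := by
  classical
  intro u v huv
  have h1 : ∀ w : CoprodI.Word M, Word.prod w • CoprodI.Word.empty = w := fun w =>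
    CoprodI.Word.equiv.right_inv w
  rw [← h1 u, ← h1 v, huv]

section Two

open Coprod

variable {G : Type*} {H : Type*} [Group G] [Group H]

/-- The basic commutators in the free product. -/
def comGH (g : G) (h : H) : Coprod G H := ⁅(inl g : Coprod G H), inr h⁆

/-- The set of basic commutators. -/
def ScSet (G H : Type*) [Group G] [Group H] : Set (Coprod G H) :=
  Set.range fun p : G × H => comGH p.1 p.2

theorem toProd_comGH (g : G) (h : H) : toProd (comGH g h) = 1 := by
  simp only [comGH, map_commutatorElement, toProd_apply_inl, toProd_apply_inr,
    commutatorElement_def]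
  ext <;> simp

theorem conj_inl_comGH (a g : G) (h : H) :
    inl a * comGH g h * (inl a)⁻¹ = comGH (a * g) h * (comGH a h)⁻¹ := by
  simp only [comGH, commutatorElement_def, map_mul]
  group

theorem conj_inr_comGH (b : H) (g : G) (h : H) :
    inr b * comGH g h * (inr b)⁻¹ = (comGH g b)⁻¹ * comGH g (b * h) := by
  simp only [comGH, commutatorElement_def, map_mul]
  group

theorem normal_closure_ScSet : (Subgroup.closure (ScSet G H)).Normal := by
  set N := Subgroup.closure (ScSet G H) with hN
  constructor
  intro n hn x
  revert n
  have key : ∀ x : Coprod G H, ∀ n ∈ N, x * n * x⁻¹ ∈ N := by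
    intro x
    induction x using Coprod.induction_on with
    | inl a =>
      intro n hn
      have : N.map (MulAut.conj (inl (N := H) a)).toMonoidHom ≤ N := by
        rw [hN, MonoidHom.map_closure, Subgroup.closure_le]
        rintro - ⟨-, ⟨⟨g, h⟩, rfl⟩, rfl⟩
        have : (MulAut.conj (inl (N := H) a)) (comGH g h) =
            comGH (a * g) h * (comGH a h)⁻¹ := by
          rw [MulAut.conj_apply, conj_inl_comGH]
        rw [MulEquiv.coe_toMonoidHom, this]
        exact Subgroup.mul_mem _ (Subgroup.subset_closure ⟨(a * g, h), rfl⟩)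
          (Subgroup.inv_mem _ (Subgroup.subset_closure ⟨(a, h), rfl⟩))
      simpa using this (Subgroup.mem_map_of_mem _ hn)
    | inr b =>
      intro n hn
      have : N.map (MulAut.conj (inr (M := G) b)).toMonoidHom ≤ N := by
        rw [hN, MonoidHom.map_closure, Subgroup.closure_le]
        rintro - ⟨-, ⟨⟨g, h⟩, rfl⟩, rfl⟩
        have : (MulAut.conj (inr (M := G) b)) (comGH g h) =
            (comGH g b)⁻¹ * comGH g (b * h) := by
          rw [MulAut.conj_apply, conj_inr_comGH]
        rw [MulEquiv.coe_toMonoidHom, this]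
        exact Subgroup.mul_mem _
          (Subgroup.inv_mem _ (Subgroup.subset_closure ⟨(g, b), rfl⟩))
          (Subgroup.subset_closure ⟨(g, b * h), rfl⟩)
      simpa using this (Subgroup.mem_map_of_mem _ hn)
    | mul x y hx hy =>
      intro n hn
      have : x * y * n * (x * y)⁻¹ = x * (y * n * y⁻¹) * x⁻¹ := by group
      rw [this]
      exact hx _ (hy _ hn)
  intro n hn
  exact key x n hn

theorem ker_toProd_eq :
    MonoidHom.ker (toProd : Coprod G H →* G × H) = Subgroup.closure (ScSet G H) := by
  set N := Subgroup.closure (ScSet G H) with hN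
  haveI : N.Normal := normal_closure_ScSet
  apply le_antisymm
  · -- key direction, via the quotient
    intro x hx
    let mk : Coprod G H →* (Coprod G H ⧸ N) := QuotientGroup.mk' N
    have hcomm : ∀ (g : G) (h : H), Commute (mk (inl g)) (mk (inr h)) := by
      intro g h
      have h1 : mk ⁅(inl g : Coprod G H), inr h⁆ = 1 :=
        (QuotientGroup.eq_one_iff _).mpr (Subgroup.subset_closure ⟨(g, h), rfl⟩)
      rw [← commutatorElement_eq_one_iff_commute, ← map_commutatorElement]
      exact h1
    let ρ : G × H →* (Coprod G H ⧸ N) :=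
      MonoidHom.noncommCoprod (mk.comp inl) (mk.comp inr) hcomm
    have hfact : ρ.comp toProd = mk := by
      apply Coprod.hom_ext <;> ext x <;>
        simp [ρ, MonoidHom.noncommCoprod, MonoidHom.comp_apply]
    have : mk x = 1 := by
      rw [← hfact]
      simp [MonoidHom.mem_ker.mp hx]
    exact (QuotientGroup.eq_one_iff x).mp this
  · rw [hN, Subgroup.closure_le]
    rintro - ⟨⟨g, h⟩, rfl⟩
    exact MonoidHom.mem_ker.mpr (toProd_comGH g h)

end Two

end LIAux

namespace LIAux

section Bridge

open Coprod

variable {G : Type u} {H : Type v} [Group G] [Group H]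

/-- The two-member family of groups, in a common universe. -/
def MM (G : Type u) (H : Type v) : Bool → Type (max u v) :=
  fun b => cond b (ULift.{v} G) (ULift.{u} H)

instance instMMGroup {G : Type u} {H : Type v} [Group G] [Group H] : ∀ b, Group (MM G H b)
  | true => inferInstanceAs (Group (ULift G))
  | false => inferInstanceAs (Group (ULift H))

noncomputable instance instMMDec {G : Type u} {H : Type v} : ∀ b, DecidableEq (MM G H b) :=
  fun _ => Classical.decEq _

/-- The comparison map from the binary coproduct to the indexed coproduct. -/
def ehom : Coprod G H →* CoprodI (MM G H) :=
  Coprod.lift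
    ((CoprodI.of (M := MM G H) (i := true)).comp (MulEquiv.ulift.symm.toMonoidHom))
    ((CoprodI.of (M := MM G H) (i := false)).comp (MulEquiv.ulift.symm.toMonoidHom))

theorem ehom_inl (g : G) :
    ehom (inl g) = CoprodI.of (M := MM G H) (i := true) (ULift.up g) := rfl

theorem ehom_inr (h : H) :
    ehom (inr h) = CoprodI.of (M := MM G H) (i := false) (ULift.up h) := rfl

/-- The index type for the free basis: pairs of nontrivial elements. -/
def PPIdx (G : Type u) (H : Type v) [Group G] [Group H] : Type max u v := {g : G // g ≠ 1} × {h : H // h ≠ 1}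

/-- The commutators inside the indexed coproduct. -/
def cWord (p : PPIdx G H) : CoprodI (MM G H) :=
  CoprodI.of (M := MM G H) (i := true) (ULift.up p.1.1) *
    CoprodI.of (M := MM G H) (i := false) (ULift.up p.2.1) *
    (CoprodI.of (M := MM G H) (i := true) (ULift.up p.1.1))⁻¹ *
    (CoprodI.of (M := MM G H) (i := false) (ULift.up p.2.1))⁻¹

theorem ehom_comGH (g : G) (h : H) :
    ehom (comGH g h) =
      CoprodI.of (M := MM G H) (i := true) (ULift.up g) *
        CoprodI.of (M := MM G H) (i := false) (ULift.up h) *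
        (CoprodI.of (M := MM G H) (i := true) (ULift.up g))⁻¹ *
        (CoprodI.of (M := MM G H) (i := false) (ULift.up h))⁻¹ := by
  simp only [comGH, commutatorElement_def, map_mul, map_inv, ehom_inl, ehom_inr]

theorem up_ne_one {g : G} (hg : g ≠ 1) : (ULift.up g : ULift G) ≠ 1 := by
  simpa [ULift.ext_iff] using hg

/-- The ping-pong set `X`. -/
def XS (p : PPIdx G H) : Set (CoprodI.Word (MM G H)) :=
  {w | w.toList.take 2 =
      [⟨true, ULift.up p.1.1⟩, ⟨false, ULift.up p.2.1⟩] ∧ 3 ≤ w.toList.length}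

/-- The ping-pong set `Y`. -/
def YS (p : PPIdx G H) : Set (CoprodI.Word (MM G H)) :=
  {w | w.toList.take 2 = [⟨false, ULift.up p.2.1⟩, ⟨true, ULift.up p.1.1⟩]}

theorem cWord_smul_mem (p : PPIdx G H)
    {w : CoprodI.Word (MM G H)} (hw : w ∉ YS p) : cWord p • w ∈ XS p := by
  obtain ⟨u, hu, ht, hl⟩ := pp_core (M := MM G H) (i := true) (j := false) (by simp)
    (up_ne_one p.1.2) (up_ne_one p.2.2) w (fun hc => hw hc.1)
  have huw : cWord p • w = u := by
    apply prod_injective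
    rw [CoprodI.Word.prod_smul, hu, cWord]
  rw [huw]
  exact ⟨ht, hl hw⟩

theorem cWord_inv (p : PPIdx G H) :
    (cWord p)⁻¹ =
      CoprodI.of (M := MM G H) (i := false) (ULift.up p.2.1) *
        CoprodI.of (M := MM G H) (i := true) (ULift.up p.1.1) *
        (CoprodI.of (M := MM G H) (i := false) (ULift.up p.2.1))⁻¹ *
        (CoprodI.of (M := MM G H) (i := true) (ULift.up p.1.1))⁻¹ := by
  rw [cWord]; group

theorem cWord_inv_smul_mem (p : PPIdx G H)
    {w : CoprodI.Word (MM G H)} (hw : w ∉ XS p) : (cWord p)⁻¹ • w ∈ YS p := by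
  obtain ⟨u, hu, ht, -⟩ := pp_core (M := MM G H) (i := false) (j := true) (by simp)
    (up_ne_one p.2.2) (up_ne_one p.1.2) w (fun hc => hw hc)
  have huw : (cWord p)⁻¹ • w = u := by
    apply prod_injective
    rw [CoprodI.Word.prod_smul, hu, cWord_inv]
  rw [huw]
  exact ht

theorem XS_nonempty (p : PPIdx G H) : (XS p).Nonempty := by
  obtain ⟨u, -, ht, hl⟩ := pp_core (M := MM G H) (i := true) (j := false) (by simp)
    (up_ne_one p.1.2) (up_ne_one p.2.2) CoprodI.Word.empty (by simp)
  exact ⟨u, ht, hl (by simp)⟩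

theorem eq_of_pair (p q : PPIdx G H)
    (h1 : (ULift.up p.1.1 : ULift G) = ULift.up q.1.1)
    (h2 : (ULift.up p.2.1 : ULift H) = ULift.up q.2.1) : p = q := by
  refine Prod.ext (Subtype.ext ?_) (Subtype.ext ?_)
  · exact congrArg ULift.down h1
  · exact congrArg ULift.down h2

theorem sigma_snd_eq {b : Bool} {x y : MM G H b}
    (hxy : (⟨b, x⟩ : Σ c, MM G H c) = ⟨b, y⟩) : x = y :=
  eq_of_heq (Sigma.ext_iff.mp hxy).2

theorem XS_disj : Pairwise (Disjoint on (XS (G := G) (H := H))) := by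
  intro p q hpq
  rw [Function.onFun, Set.disjoint_left]
  intro w hwp hwq
  have hl := hwp.1.symm.trans hwq.1
  injection hl with h1 hl2
  injection hl2 with h2 _
  exact hpq (eq_of_pair p q (sigma_snd_eq h1) (sigma_snd_eq h2))

theorem YS_disj : Pairwise (Disjoint on (YS (G := G) (H := H))) := by
  intro p q hpq
  rw [Function.onFun, Set.disjoint_left]
  intro w hwp hwq
  have hl := Set.mem_setOf_eq ▸ hwp
  have hl' := Set.mem_setOf_eq ▸ hwq
  have hl2 := hl.symm.trans hl'
  injection hl2 with h1 hl3
  injection hl3 with h2 _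
  exact hpq (eq_of_pair p q (sigma_snd_eq h2) (sigma_snd_eq h1))

theorem XS_YS_disj (p q : PPIdx G H) : Disjoint (XS p) (YS q) := by
  rw [Set.disjoint_left]
  intro w hwp hwq
  have hl := hwp.1.symm.trans hwq
  injection hl with h1 _
  exact absurd (Sigma.ext_iff.mp h1).1 (by simp)

end Bridge

end LIAux

namespace LIAux

section Inj

open Coprod

variable {G : Type u} {H : Type v} [Group G] [Group H]

theorem lift_cWord_injective_of_nontrivial [Nontrivial (PPIdx G H)] :
    Function.Injective (FreeGroup.lift (cWord (G := G) (H := H))) := by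
  apply FreeGroup.injective_lift_of_ping_pong (cWord (G := G) (H := H)) XS YS
  · exact XS_nonempty
  · exact XS_disj
  · exact YS_disj
  · exact XS_YS_disj
  · rintro p - ⟨w, hw, rfl⟩
    exact cWord_smul_mem p hw
  · rintro p - ⟨w, hw, rfl⟩
    exact cWord_inv_smul_mem p hw

theorem cWord_zpow_ne_one (p : PPIdx G H) {n : ℤ} (hn : n ≠ 0) : cWord p ^ n ≠ 1 := by
  have key : ∀ m : ℕ, 0 < m → ∃ w ∈ XS p, Word.prod w = cWord p ^ m := by
    intro m hm
    induction m with
    | zero => omega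
    | succ k ih =>
      rcases Nat.eq_zero_or_pos k with rfl | hk
      · obtain ⟨u, hu, ht, hl⟩ := pp_core (M := MM G H) (i := true) (j := false) (by simp)
          (up_ne_one p.1.2) (up_ne_one p.2.2) CoprodI.Word.empty (by simp)
        refine ⟨u, ⟨ht, hl (by simp)⟩, ?_⟩
        rw [hu, cWord]
        simp
      · obtain ⟨w, hwX, hwp⟩ := ih hk
        have hwY : ¬(w.toList.take 2 =
            [⟨false, ULift.up p.2.1⟩, ⟨true, ULift.up p.1.1⟩] ∧ 3 ≤ w.toList.length) := by
          rintro ⟨hc, -⟩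
          have := hwX.1.symm.trans hc
          injection this with h1 _
          exact absurd (Sigma.ext_iff.mp h1).1 (by simp)
        obtain ⟨u, hu, ht, hl⟩ := pp_core (M := MM G H) (i := true) (j := false) (by simp)
          (up_ne_one p.1.2) (up_ne_one p.2.2) w hwY
        refine ⟨u, ⟨ht, ?_⟩, ?_⟩
        · apply hl
          intro hc
          have := hwX.1.symm.trans hc
          injection this with h1 _
          exact absurd (Sigma.ext_iff.mp h1).1 (by simp)
        · rw [hu, hwp, ← cWord, pow_succ']
    
  have keyN : ∀ m : ℕ, 0 < m → cWord p ^ m ≠ 1 := by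
    intro m hm hone
    obtain ⟨w, hwX, hwp⟩ := key m hm
    have : w = CoprodI.Word.empty := prod_injective (by rw [hwp, hone]; rfl)
    rw [this] at hwX
    simpa using hwX.1
  rcases lt_or_gt_of_ne hn with hneg | hpos
  · intro hone
    have h1 : cWord p ^ (-n : ℤ) ≠ 1 := by
      obtain ⟨m, hm⟩ : ∃ m : ℕ, (-n : ℤ) = m := ⟨(-n).toNat, by omega⟩
      rw [hm, zpow_natCast]
      exact keyN m (by omega)
    exact h1 (by rw [zpow_neg, hone, inv_one])
  · intro hone
    obtain ⟨m, hm⟩ : ∃ m : ℕ, (n : ℤ) = m := ⟨n.toNat, by omega⟩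
    rw [hm, zpow_natCast] at hone
    exact keyN m (by omega) hone

theorem lift_cWord_injective_of_subsingleton [Nonempty (PPIdx G H)]
    [Subsingleton (PPIdx G H)] :
    Function.Injective (FreeGroup.lift (cWord (G := G) (H := H))) := by
  obtain ⟨p⟩ := ‹Nonempty (PPIdx G H)›
  set σ : FreeGroup (PPIdx G H) →* Multiplicative ℤ :=
    FreeGroup.lift fun _ => Multiplicative.ofAdd (1 : ℤ) with hσ
  have hrep : ∀ x : FreeGroup (PPIdx G H), x = FreeGroup.of p ^ (Multiplicative.toAdd (σ x)) := by
    intro x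
    induction x using FreeGroup.induction_on with
    | C1 => simp
    | of q =>
      obtain rfl : p = q := Subsingleton.elim p q
      have h1 : σ (FreeGroup.of p) = Multiplicative.ofAdd 1 := by rw [hσ, FreeGroup.lift_apply_of]
      change FreeGroup.of p = FreeGroup.of p ^ Multiplicative.toAdd (σ (FreeGroup.of p))
      rw [h1]
      simp
    | inv_of q ihq =>
      obtain rfl : p = q := Subsingleton.elim p q
      have h1 : σ ((FreeGroup.of p)⁻¹) = (Multiplicative.ofAdd (1 : ℤ))⁻¹ := by
        rw [map_inv, hσ, FreeGroup.lift_apply_of]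
      change (FreeGroup.of p)⁻¹ = FreeGroup.of p ^ Multiplicative.toAdd (σ (FreeGroup.of p)⁻¹)
      rw [h1]
      simp
    | mul x y ihx ihy =>
      rw [map_mul, toAdd_mul, zpow_add, ← ihx, ← ihy]
  intro x y hxy
  rw [hrep x, hrep y]
  congr 1
  have hmap : ∀ z : FreeGroup (PPIdx G H),
      FreeGroup.lift (cWord (G := G) (H := H)) z = cWord p ^ (Multiplicative.toAdd (σ z)) := by
    intro z
    conv_lhs => rw [hrep z]
    rw [map_zpow, FreeGroup.lift_apply_of]
  by_contra hne
  have : cWord p ^ (Multiplicative.toAdd (σ x) - Multiplicative.toAdd (σ y)) ≠ 1 :=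
    cWord_zpow_ne_one p (by omega)
  apply this
  rw [zpow_sub, ← hmap, ← hmap, hxy]
  simp

end Inj

end LIAux

namespace LIAux

section Final

open Coprod

variable {G : Type u} {H : Type v} [Group G] [Group H]

/-- The free basis map of the cartesian subgroup. -/
def psi : FreeGroup (PPIdx G H) →* Coprod G H :=
  FreeGroup.lift fun p => comGH p.1.1 p.2.1

theorem ehom_comp_psi :
    (ehom (G := G) (H := H)).comp psi = FreeGroup.lift (cWord (G := G) (H := H)) := by
  apply FreeGroup.ext_hom
  intro p
  rw [MonoidHom.comp_apply, psi, FreeGroup.lift_apply_of, FreeGroup.lift_apply_of, ehom_comGH, cWord]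

theorem psi_injective [Nontrivial G] [Nontrivial H] :
    Function.Injective (psi (G := G) (H := H)) := by
  have hinj : Function.Injective ((ehom (G := G) (H := H)).comp psi) := by
    rw [ehom_comp_psi]
    by_cases hnt : Nontrivial (PPIdx G H)
    · exact lift_cWord_injective_of_nontrivial
    · haveI := not_nontrivial_iff_subsingleton.mp hnt
      haveI : Nonempty (PPIdx G H) := by
        obtain ⟨g, hg⟩ := exists_ne (1 : G)
        obtain ⟨h, hh⟩ := exists_ne (1 : H)
        exact ⟨⟨⟨g, hg⟩, ⟨h, hh⟩⟩⟩
      exact lift_cWord_injective_of_subsingleton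
  rw [MonoidHom.coe_comp] at hinj
  exact hinj.of_comp

theorem psi_range :
    (psi (G := G) (H := H)).range = MonoidHom.ker (toProd : Coprod G H →* G × H) := by
  rw [ker_toProd_eq, psi, FreeGroup.range_lift_eq_closure]
  apply le_antisymm
  · rw [Subgroup.closure_le]
    rintro - ⟨p, rfl⟩
    exact Subgroup.subset_closure ⟨(p.1.1, p.2.1), rfl⟩
  · rw [Subgroup.closure_le]
    rintro - ⟨⟨g, h⟩, rfl⟩
    by_cases hg : g = 1
    · subst hg
      have h1 : comGH (1 : G) h = 1 := by simp [comGH, commutatorElement_def]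
      simp only [h1]
      exact Subgroup.one_mem _
    by_cases hh : h = 1
    · subst hh
      have h1 : comGH g (1 : H) = 1 := by simp [comGH, commutatorElement_def]
      simp only [h1]
      exact Subgroup.one_mem _
    exact Subgroup.subset_closure ⟨(⟨g, hg⟩, ⟨h, hh⟩), rfl⟩

/-- A nontrivial free group surjects onto `Multiplicative ℤ`. -/
theorem exists_surj_of_isFreeGroup (K : Type*) [Group K] [IsFreeGroup K] [Nontrivial K] :
    ∃ f : K →* Multiplicative ℤ, Function.Surjective f := by
  classical
  haveI : Nonempty (IsFreeGroup.Generators K) := by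
    obtain ⟨x, hx⟩ := exists_ne (1 : K)
    set e := IsFreeGroup.toFreeGroup K with he
    have hxe : e x ≠ 1 := fun hc => hx (by simpa using congrArg e.symm hc)
    have : (e x).toWord ≠ [] := fun hc => hxe (FreeGroup.toWord_eq_nil_iff.mp hc)
    cases hw : (e x).toWord with
    | nil => exact absurd hw this
    | cons a t => exact ⟨a.1⟩
  obtain ⟨x₀⟩ := ‹Nonempty (IsFreeGroup.Generators K)›
  refine ⟨IsFreeGroup.lift (fun x => if x = x₀ then Multiplicative.ofAdd 1 else 1), fun m => ?_⟩
  refine ⟨IsFreeGroup.of x₀ ^ (Multiplicative.toAdd m), ?_⟩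
  rw [map_zpow, IsFreeGroup.lift_of, if_pos rfl]
  apply Multiplicative.toAdd.injective
  rw [toAdd_zpow]
  simp

/-- Master lemma: a nontrivial subgroup contained in the image of an injective
homomorphism from a free group surjects onto `ℤ`. -/
theorem exists_surj_of_le_range {F : Type*} {Γ : Type*} [Group F] [IsFreeGroup F] [Group Γ]
    (Ψ : F →* Γ) (hinj : Function.Injective Ψ) (K : Subgroup Γ) (hle : K ≤ Ψ.range)
    (hbot : K ≠ ⊥) : ∃ f : K →* Multiplicative ℤ, Function.Surjective f := by
  set K' := K.comap Ψ with hK'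
  have hmap : K'.map Ψ = K := by
    rw [hK', Subgroup.map_comap_eq, inf_eq_right.mpr hle]
  let e : ↥K' ≃* ↥K :=
    (Subgroup.equivMapOfInjective K' Ψ hinj).trans (MulEquiv.subgroupCongr hmap)
  haveI : Nontrivial ↥K := (Subgroup.nontrivial_iff_ne_bot K).mpr hbot
  haveI : Nontrivial ↥K' := e.toEquiv.nontrivial
  obtain ⟨f, hf⟩ := exists_surj_of_isFreeGroup ↥K'
  exact ⟨f.comp e.symm.toMonoidHom, hf.comp e.symm.surjective⟩

theorem snd_injective_of_subsingleton [Subsingleton G] :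
    Function.Injective (Coprod.snd : Coprod G H →* H) := by
  have key : (Coprod.inr.comp (Coprod.snd : Coprod G H →* H)) = MonoidHom.id _ := by
    apply Coprod.hom_ext
    · ext g
      simp [Subsingleton.elim g 1]
    · ext h
      simp
  intro x y hxy
  have hx := congrArg (fun z => z x) (congrArg DFunLike.coe key)
  have hy := congrArg (fun z => z y) (congrArg DFunLike.coe key)
  simp only [MonoidHom.comp_apply, MonoidHom.id_apply] at hx hy
  rw [← hx, ← hy, hxy]

theorem fst_injective_of_subsingleton [Subsingleton H] :
    Function.Injective (Coprod.fst : Coprod G H →* G) := by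
  have key : (Coprod.inl.comp (Coprod.fst : Coprod G H →* G)) = MonoidHom.id _ := by
    apply Coprod.hom_ext
    · ext g
      simp
    · ext h
      simp [Subsingleton.elim h 1]
  intro x y hxy
  have hx := congrArg (fun z => z x) (congrArg DFunLike.coe key)
  have hy := congrArg (fun z => z y) (congrArg DFunLike.coe key)
  simp only [MonoidHom.comp_apply, MonoidHom.id_apply] at hx hy
  rw [← hx, ← hy, hxy]

end Final

end LIAux

/-- The free product of two locally indicable groups is locally indicable. -/
theorem stmt_13 {G H : Type*} [Group G] [Group H]
    (hG : LocallyIndicable G) (hH : LocallyIndicable H) :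
    LocallyIndicable (Monoid.Coprod G H) := by
  intro K hKbot hKfg
  haveI : Group.FG ↥K := hKfg
  by_cases h1 : K.map Monoid.Coprod.fst ≠ ⊥
  · obtain ⟨f, hf⟩ := hG (K.map Monoid.Coprod.fst) h1
      (Group.fg_of_surjective (MonoidHom.subgroupMap_surjective Monoid.Coprod.fst K))
    exact ⟨f.comp (Monoid.Coprod.fst.subgroupMap K),
      hf.comp (MonoidHom.subgroupMap_surjective _ _)⟩
  by_cases h2 : K.map Monoid.Coprod.snd ≠ ⊥
  · obtain ⟨f, hf⟩ := hH (K.map Monoid.Coprod.snd) h2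
      (Group.fg_of_surjective (MonoidHom.subgroupMap_surjective Monoid.Coprod.snd K))
    exact ⟨f.comp (Monoid.Coprod.snd.subgroupMap K),
      hf.comp (MonoidHom.subgroupMap_surjective _ _)⟩
  push_neg at h1 h2
  have hfst : ∀ x ∈ K, Monoid.Coprod.fst x = 1 := by
    intro x hx
    have : Monoid.Coprod.fst x ∈ K.map Monoid.Coprod.fst := ⟨x, hx, rfl⟩
    rwa [h1, Subgroup.mem_bot] at this
  have hsnd : ∀ x ∈ K, Monoid.Coprod.snd x = 1 := by
    intro x hx
    have : Monoid.Coprod.snd x ∈ K.map Monoid.Coprod.snd := ⟨x, hx, rfl⟩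
    rwa [h2, Subgroup.mem_bot] at this
  have hker : K ≤ MonoidHom.ker (Monoid.Coprod.toProd : Monoid.Coprod G H →* G × H) := by
    intro x hx
    rw [MonoidHom.mem_ker, ← Monoid.Coprod.prod_mk_fst_snd, hfst x hx, hsnd x hx]
    rfl
  by_cases hsG : Subsingleton G
  · exfalso
    apply hKbot
    rw [eq_bot_iff]
    intro x hx
    rw [Subgroup.mem_bot]
    apply LIAux.snd_injective_of_subsingleton (G := G)
    rw [hsnd x hx, map_one]
  by_cases hsH : Subsingleton H
  · exfalso
    apply hKbot
    rw [eq_bot_iff]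
    intro x hx
    rw [Subgroup.mem_bot]
    apply LIAux.fst_injective_of_subsingleton (H := H)
    rw [hfst x hx, map_one]
  haveI : Nontrivial G := not_subsingleton_iff_nontrivial.mp hsG
  haveI : Nontrivial H := not_subsingleton_iff_nontrivial.mp hsH
  exact LIAux.exists_surj_of_le_range LIAux.psi LIAux.psi_injective K
    (by rw [LIAux.psi_range]; exact hker) hKbot
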